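/- arXiv:2310.03447 — 2 statements merged into one kernel-verified Lean document; each statement's English description precedes it below -/
import Mathlib

section
/- The exponential mechanism, which on input D selects q ∈ Q with probability proportional to exp((ε/(2Δ))·u(q;D)), where Δ = max_q of the L1 sensitivity of u(q;·), satisfies ε²/8-zCDP. -/
open Real Set

/-- Core two-point (Bernoulli) cumulant bound: if a two-point log-moment function vanishes at
`t = 0` and `t = 1` and the two points are `a, b`, then at `t = α` it is at most
`(b-a)²/8 · α(α-1)`, by concavity (second derivative at most `(b-a)²/4`). -/
lemma bernoulli_core (a b l m α : ℝ) (hl : 0 < l) (hm : 0 < m) (hlm : l + m = 1)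
    (h1 : l * Real.exp a + m * Real.exp b = 1) (hα : 1 < α) :
    l * Real.exp (α * a) + m * Real.exp (α * b) ≤
      Real.exp ((b - a) ^ 2 / 8 * (α * (α - 1))) := by
  set C : ℝ := (b - a) ^ 2 / 8 with hC
  set S : ℝ → ℝ := fun t => l * Real.exp (t * a) + m * Real.exp (t * b) with hSdef
  have hS : ∀ t, 0 < S t := fun t => by positivity
  set S1 : ℝ → ℝ := fun t => l * (Real.exp (t * a) * a) + m * (Real.exp (t * b) * b) with hS1def
  set S2 : ℝ → ℝ := fun t =>
    l * (Real.exp (t * a) * a * a) + m * (Real.exp (t * b) * b * b) with hS2def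
  set g : ℝ → ℝ := fun t => Real.log (S t) - C * (t ^ 2 - t) with hgdef
  set g' : ℝ → ℝ := fun t => S1 t / S t - C * (2 * t - 1) with hg'def
  set g'' : ℝ → ℝ := fun t => (S2 t * S t - S1 t * S1 t) / (S t) ^ 2 - C * 2 with hg''def
  have hDS : ∀ t, HasDerivAt S (S1 t) t := by
    intro t
    have ha : HasDerivAt (fun t : ℝ => Real.exp (t * a)) (Real.exp (t * a) * a) t := by
      simpa using ((hasDerivAt_id t).mul_const a).exp
    have hb : HasDerivAt (fun t : ℝ => Real.exp (t * b)) (Real.exp (t * b) * b) t := by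
      simpa using ((hasDerivAt_id t).mul_const b).exp
    exact (ha.const_mul l).add (hb.const_mul m)
  have hDS1 : ∀ t, HasDerivAt S1 (S2 t) t := by
    intro t
    have ha : HasDerivAt (fun t : ℝ => Real.exp (t * a) * a) (Real.exp (t * a) * a * a) t := by
      simpa using (((hasDerivAt_id t).mul_const a).exp).mul_const a
    have hb : HasDerivAt (fun t : ℝ => Real.exp (t * b) * b) (Real.exp (t * b) * b * b) t := by
      simpa using (((hasDerivAt_id t).mul_const b).exp).mul_const b
    exact (ha.const_mul l).add (hb.const_mul m)
  have hDg : ∀ t, HasDerivAt g (g' t) t := by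
    intro t
    have h1' : HasDerivAt (fun t => Real.log (S t)) (S1 t / S t) t :=
      (hDS t).log (hS t).ne'
    have h2' : HasDerivAt (fun t : ℝ => C * (t ^ 2 - t)) (C * (2 * t - 1)) t := by
      have := ((hasDerivAt_pow 2 t).sub (hasDerivAt_id t)).const_mul C
      refine this.congr_deriv ?_
      ring
    exact h1'.sub h2'
  have hDg' : ∀ t, HasDerivAt g' (g'' t) t := by
    intro t
    have h1' : HasDerivAt (fun t => S1 t / S t)
        ((S2 t * S t - S1 t * S1 t) / (S t) ^ 2) t :=
      (hDS1 t).div (hDS t) (hS t).ne'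
    have h2' : HasDerivAt (fun t : ℝ => C * (2 * t - 1)) (C * 2) t := by
      have := (((hasDerivAt_id t).const_mul 2).sub_const 1).const_mul C
      refine this.congr_deriv ?_
      ring
    exact h1'.sub h2'
  have hg''le : ∀ t, g'' t ≤ 0 := by
    intro t
    have hx : 0 < Real.exp (t * a) := Real.exp_pos _
    have hy : 0 < Real.exp (t * b) := Real.exp_pos _
    set x := Real.exp (t * a)
    set y := Real.exp (t * b)
    have hnum : S2 t * S t - S1 t * S1 t = l * m * (a - b) ^ 2 * (x * y) := by
      simp only [hS2def, hSdef, hS1def]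
      ring
    have hSq : 0 < (S t) ^ 2 := pow_pos (hS t) 2
    have hineq : S2 t * S t - S1 t * S1 t ≤ C * 2 * (S t) ^ 2 := by
      rw [hnum, hC]
      have hamgm : 4 * (l * m * (x * y)) ≤ (S t) ^ 2 := by
        have h0 : 0 ≤ (l * x - m * y) ^ 2 := sq_nonneg _
        simp only [hSdef]
        nlinarith
      calc l * m * (a - b) ^ 2 * (x * y)
          = (b - a) ^ 2 / 4 * (4 * (l * m * (x * y))) := by ring
        _ ≤ (b - a) ^ 2 / 4 * (S t) ^ 2 :=
            mul_le_mul_of_nonneg_left hamgm (by positivity)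
        _ = (b - a) ^ 2 / 8 * 2 * (S t) ^ 2 := by ring
    simp only [hg''def]
    rw [sub_nonpos, div_le_iff₀ hSq]
    linarith
  have hconc : ConcaveOn ℝ univ g := by
    apply concaveOn_of_hasDerivWithinAt2_nonpos (f' := g') (f'' := g'') convex_univ
    · exact fun t _ => (hDg t).continuousAt.continuousWithinAt
    · exact fun t _ => (hDg t).hasDerivWithinAt
    · exact fun t _ => (hDg' t).hasDerivWithinAt
    · exact fun t _ => hg''le t
  have hg0 : g 0 = 0 := by
    simp only [hgdef, hSdef]
    norm_num [hlm]
  have hg1 : g 1 = 0 := by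
    simp only [hgdef, hSdef]
    norm_num [h1]
  have hαpos : (0 : ℝ) < α := by linarith
  have hkey : g α ≤ 0 := by
    have ha' : (0:ℝ) ≤ 1 - 1 / α := by
      rw [sub_nonneg]
      exact div_le_one_of_le₀ (by linarith) hαpos.le
    have hb' : (0:ℝ) ≤ 1 / α := by positivity
    have hab' : (1 - 1 / α) + 1 / α = 1 := by ring
    have hcomb := hconc.2 (mem_univ (0 : ℝ)) (mem_univ α) ha' hb' hab'
    have hpt : (1 - 1 / α) • (0 : ℝ) + (1 / α) • α = 1 := by
      rw [smul_eq_mul, smul_eq_mul, mul_zero, zero_add, one_div, inv_mul_cancel₀ hαpos.ne']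
    rw [hpt, hg1, hg0] at hcomb
    have hle : 0 ≥ (1 / α) * g α := by simpa using hcomb
    by_contra h
    push_neg at h
    have : 0 < 1 / α * g α := mul_pos (by positivity) h
    linarith
  have hlog : Real.log (S α) ≤ C * (α ^ 2 - α) := by
    have := hkey
    simp only [hgdef] at this
    linarith
  have : S α ≤ Real.exp (C * (α ^ 2 - α)) := by
    calc S α = Real.exp (Real.log (S α)) := (Real.exp_log (hS α)).symm
    _ ≤ Real.exp (C * (α ^ 2 - α)) := Real.exp_le_exp.mpr hlog
  calc l * Real.exp (α * a) + m * Real.exp (α * b) = S α := rfl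
    _ ≤ Real.exp (C * (α ^ 2 - α)) := this
    _ = Real.exp ((b - a) ^ 2 / 8 * (α * (α - 1))) := by rw [hC]; ring_nf

/-- The two-point bound, allowing zero weights. -/
lemma bernoulli_bound (a b l m α : ℝ) (hl : 0 ≤ l) (hm : 0 ≤ m) (hlm : l + m = 1)
    (h1 : l * Real.exp a + m * Real.exp b = 1) (hα : 1 < α) :
    l * Real.exp (α * a) + m * Real.exp (α * b) ≤
      Real.exp ((b - a) ^ 2 / 8 * (α * (α - 1))) := by
  have hexp0 : (0:ℝ) ≤ (b - a) ^ 2 / 8 * (α * (α - 1)) := by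
    have : (0:ℝ) ≤ α * (α - 1) := by nlinarith
    positivity
  rcases eq_or_lt_of_le hl with hl0 | hlpos
  · have hm1 : m = 1 := by linarith
    have hb0 : Real.exp b = 1 := by
      rw [← hl0] at h1; rw [hm1] at h1; linarith [h1]
    have hval : l * Real.exp (α * a) + m * Real.exp (α * b) = 1 := by
      have hb' : b = 0 := (Real.exp_eq_one_iff b).mp hb0
      rw [← hl0, hm1, hb']
      simp
    rw [hval]
    exact Real.one_le_exp hexp0
  rcases eq_or_lt_of_le hm with hm0 | hmpos
  · have hl1 : l = 1 := by linarith
    have ha0 : Real.exp a = 1 := by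
      rw [← hm0] at h1; rw [hl1] at h1; linarith [h1]
    have hval : l * Real.exp (α * a) + m * Real.exp (α * b) = 1 := by
      have ha' : a = 0 := (Real.exp_eq_one_iff a).mp ha0
      rw [← hm0, hl1, ha']
      simp
    rw [hval]
    exact Real.one_le_exp hexp0
  exact bernoulli_core a b l m α hlpos hmpos hlm h1 hα

/-- The exponential mechanism, which on input `D` selects `q ∈ Q` with probability
proportional to `exp((ε/(2Δ))·u(q;D))`, where `Δ = max_q` of the L1 sensitivity of `u(q;·)`,
satisfies `ε²/8`-zCDP: for all neighboring `D, D′` and `α > 1`, the Rényi divergence of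
order `α` between the output distributions is at most `(ε²/8)·α`. -/
theorem exponential_mechanism_zCDP {Dset Q : Type*} [Fintype Q] [Nonempty Q]
    (adj : Dset → Dset → Prop) (u : Q → Dset → ℝ) (ε Δ : ℝ) (hε : 0 < ε) (hΔ : 0 < Δ)
    (hsens : ∀ q D D', adj D D' → |u q D - u q D'| ≤ Δ)
    (p : Dset → Q → ℝ)
    (hp : ∀ D q, p D q =
      Real.exp (ε * u q D / (2 * Δ)) / ∑ r, Real.exp (ε * u r D / (2 * Δ))) :
    ∀ D D', adj D D' → ∀ α : ℝ, 1 < α →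
      (α - 1)⁻¹ * Real.log (∑ q, p D q ^ α * p D' q ^ (1 - α)) ≤ (ε ^ 2 / 8) * α := by
  intro D D' hadj α hα
  have hα1 : (0:ℝ) < α - 1 := by linarith
  have hZ : ∀ E : Dset, 0 < ∑ rr, Real.exp (ε * u rr E / (2 * Δ)) := fun E =>
    Finset.sum_pos (fun rr _ => Real.exp_pos _) Finset.univ_nonempty
  have hppos : ∀ E q, 0 < p E q := fun E q => by
    rw [hp]
    exact div_pos (Real.exp_pos _) (hZ E)
  set w : Q → ℝ := fun q => p D' q with hwdef
  set r : Q → ℝ := fun q => p D q / p D' q with hrdef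
  have hwpos : ∀ q, 0 < w q := fun q => hppos D' q
  have hrpos : ∀ q, 0 < r q := fun q => div_pos (hppos D q) (hppos D' q)
  have hsum : ∀ E : Dset, ∑ q, p E q = 1 := by
    intro E
    simp only [hp]
    rw [← Finset.sum_div, div_self (hZ E).ne']
  have hw1 : ∑ q, w q = 1 := hsum D'
  have hwr : ∑ q, w q * r q = 1 := by
    have he : ∀ q, w q * r q = p D q := by
      intro q
      simp only [hwdef, hrdef]
      rw [mul_comm, div_mul_cancel₀ _ (hppos D' q).ne']
    rw [Finset.sum_congr rfl fun q _ => he q]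
    exact hsum D
  set Zr : ℝ := (∑ rr, Real.exp (ε * u rr D' / (2 * Δ))) /
      (∑ rr, Real.exp (ε * u rr D / (2 * Δ))) with hZrdef
  have hZrpos : 0 < Zr := div_pos (hZ D') (hZ D)
  set A : ℝ := Real.exp (-(ε / 2)) * Zr with hAdef
  set B : ℝ := Real.exp (ε / 2) * Zr with hBdef
  have hApos : 0 < A := by positivity
  have hBpos : 0 < B := by positivity
  have hAB : A < B :=
    mul_lt_mul_of_pos_right (Real.exp_lt_exp.mpr (by linarith)) hZrpos
  have hBAne : B - A ≠ 0 := by linarith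
  have hBA : B = A * Real.exp ε := by
    have hee : Real.exp (-(ε / 2)) * Real.exp ε = Real.exp (ε / 2) := by
      rw [← Real.exp_add]
      exact congrArg Real.exp (by ring)
    rw [hAdef, hBdef, ← hee]
    ring
  have hrange : ∀ q, A ≤ r q ∧ r q ≤ B := by
    intro q
    have hq : r q = Real.exp (ε * u q D / (2 * Δ) - ε * u q D' / (2 * Δ)) * Zr := by
      simp only [hrdef, hp, hZrdef, Real.exp_sub]
      rw [div_div_div_comm]
      rw [div_div_eq_mul_div, mul_div_assoc]
    have hdiff : |ε * u q D / (2 * Δ) - ε * u q D' / (2 * Δ)| ≤ ε / 2 := by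
      have he : ε * u q D / (2 * Δ) - ε * u q D' / (2 * Δ) =
          (ε / (2 * Δ)) * (u q D - u q D') := by ring
      rw [he, abs_mul, abs_of_pos (show 0 < ε / (2 * Δ) by positivity)]
      calc ε / (2 * Δ) * |u q D - u q D'| ≤ ε / (2 * Δ) * Δ :=
            mul_le_mul_of_nonneg_left (hsens q D D' hadj) (by positivity)
        _ = ε / 2 := by field_simp
    rw [abs_le] at hdiff
    constructor
    · rw [hq, hAdef]
      exact mul_le_mul_of_nonneg_right (Real.exp_le_exp.mpr hdiff.1) hZrpos.le
    · rw [hq, hBdef]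
      exact mul_le_mul_of_nonneg_right (Real.exp_le_exp.mpr hdiff.2) hZrpos.le
  have hA1 : A ≤ 1 := by
    have h1' : A = ∑ q, w q * A := by
      rw [← Finset.sum_mul, hw1, one_mul]
    rw [h1', ← hwr]
    exact Finset.sum_le_sum fun q _ =>
      mul_le_mul_of_nonneg_left (hrange q).1 (hwpos q).le
  have h1B : (1:ℝ) ≤ B := by
    have h1' : B = ∑ q, w q * B := by
      rw [← Finset.sum_mul, hw1, one_mul]
    rw [h1', ← hwr]
    exact Finset.sum_le_sum fun q _ =>
      mul_le_mul_of_nonneg_left (hrange q).2 (hwpos q).le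
  set Aα : ℝ := A ^ α with hAαdef
  set Bα : ℝ := B ^ α with hBαdef
  -- rewrite each term of the sum
  have hterm : ∀ q, p D q ^ α * p D' q ^ (1 - α) = w q * r q ^ α := by
    intro q
    have hx := hppos D q
    have hy := hppos D' q
    have h1' : p D' q ^ (1 - α) = p D' q / p D' q ^ α := by
      rw [Real.rpow_sub hy, Real.rpow_one]
    have h2' : (p D q / p D' q) ^ α = p D q ^ α / p D' q ^ α :=
      Real.div_rpow hx.le hy.le α
    simp only [hwdef, hrdef, h1', h2']
    have hyα : p D' q ^ α ≠ 0 := (Real.rpow_pos_of_pos hy α).ne'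
    field_simp
  -- chord (convexity) bound
  have hchord : ∀ q, r q ^ α ≤ ((B - r q) * Aα + (r q - A) * Bα) / (B - A) := by
    intro q
    have hconv := convexOn_rpow hα.le
    have hθ0 : 0 ≤ (B - r q) / (B - A) :=
      div_nonneg (by linarith [(hrange q).2]) (by linarith)
    have hθ0' : 0 ≤ (r q - A) / (B - A) :=
      div_nonneg (by linarith [(hrange q).1]) (by linarith)
    have hθsum : (B - r q) / (B - A) + (r q - A) / (B - A) = 1 := by
      rw [← add_div, show B - r q + (r q - A) = B - A by ring, div_self hBAne]
    have h := hconv.2 (mem_Ici.mpr hApos.le) (mem_Ici.mpr hBpos.le) hθ0 hθ0' hθsum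
    have hpt : ((B - r q) / (B - A)) • A + ((r q - A) / (B - A)) • B = r q := by
      simp only [smul_eq_mul]
      rw [div_mul_eq_mul_div, div_mul_eq_mul_div, ← add_div,
        show (B - r q) * A + (r q - A) * B = r q * (B - A) by ring]
      exact mul_div_cancel_right₀ _ hBAne
    rw [hpt] at h
    simp only [smul_eq_mul] at h
    calc r q ^ α ≤ (B - r q) / (B - A) * A ^ α + (r q - A) / (B - A) * B ^ α := h
      _ = ((B - r q) * Aα + (r q - A) * Bα) / (B - A) := by
          rw [hAαdef, hBαdef, div_mul_eq_mul_div, div_mul_eq_mul_div, ← add_div]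
  set l : ℝ := (B - 1) / (B - A) with hldef
  set m : ℝ := (1 - A) / (B - A) with hmdef
  have hsum_le : ∑ q, w q * r q ^ α ≤ l * Aα + m * Bα := by
    calc ∑ q, w q * r q ^ α
        ≤ ∑ q, w q * (((B - r q) * Aα + (r q - A) * Bα) / (B - A)) :=
          Finset.sum_le_sum fun q _ =>
            mul_le_mul_of_nonneg_left (hchord q) (hwpos q).le
      _ = l * Aα + m * Bα := by
          have hrw : ∀ q, w q * (((B - r q) * Aα + (r q - A) * Bα) / (B - A)) =
              ((B * Aα - A * Bα) / (B - A)) * w q +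
                ((Bα - Aα) / (B - A)) * (w q * r q) := by
            intro q
            rw [mul_div_assoc', div_mul_eq_mul_div, div_mul_eq_mul_div, ← add_div]
            exact congrArg (· / (B - A)) (by ring)
          rw [Finset.sum_congr rfl fun q _ => hrw q, Finset.sum_add_distrib,
            ← Finset.mul_sum, ← Finset.mul_sum, hw1, hwr]
          rw [mul_one, mul_one, hldef, hmdef, ← add_div,
            div_mul_eq_mul_div, div_mul_eq_mul_div, ← add_div]
          exact congrArg (· / (B - A)) (by ring)
  -- apply the two-point bound with a = log A, b = log B
  have hl0 : 0 ≤ l := div_nonneg (by linarith) (by linarith)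
  have hm0 : 0 ≤ m := div_nonneg (by linarith) (by linarith)
  have hlm : l + m = 1 := by
    simp only [hldef, hmdef]
    rw [← add_div, show B - 1 + (1 - A) = B - A by ring, div_self hBAne]
  have hexpA : Real.exp (Real.log A) = A := Real.exp_log hApos
  have hexpB : Real.exp (Real.log B) = B := Real.exp_log hBpos
  have hba : Real.log B - Real.log A = ε := by
    rw [hBA, Real.log_mul hApos.ne' (Real.exp_pos ε).ne', Real.log_exp]
    ring
  have h1 : l * Real.exp (Real.log A) + m * Real.exp (Real.log B) = 1 := by
    rw [hexpA, hexpB]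
    simp only [hldef, hmdef]
    rw [div_mul_eq_mul_div, div_mul_eq_mul_div, ← add_div,
      show (B - 1) * A + (1 - A) * B = B - A by ring, div_self hBAne]
  have hbern := bernoulli_bound (Real.log A) (Real.log B) l m α hl0 hm0 hlm h1 hα
  rw [hba] at hbern
  have hAαexp : Real.exp (α * Real.log A) = Aα := by
    rw [hAαdef, Real.rpow_def_of_pos hApos, mul_comm]
  have hBαexp : Real.exp (α * Real.log B) = Bα := by
    rw [hBαdef, Real.rpow_def_of_pos hBpos, mul_comm]
  rw [hAαexp, hBαexp] at hbern
  -- combine everything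
  have hfinal : ∑ q, p D q ^ α * p D' q ^ (1 - α) ≤
      Real.exp (ε ^ 2 / 8 * (α * (α - 1))) := by
    calc ∑ q, p D q ^ α * p D' q ^ (1 - α) = ∑ q, w q * r q ^ α :=
          Finset.sum_congr rfl fun q _ => hterm q
      _ ≤ l * Aα + m * Bα := hsum_le
      _ ≤ Real.exp (ε ^ 2 / 8 * (α * (α - 1))) := hbern
  have hSpos : 0 < ∑ q, p D q ^ α * p D' q ^ (1 - α) :=
    Finset.sum_pos (fun q _ =>
      mul_pos (Real.rpow_pos_of_pos (hppos D q) α)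
        (Real.rpow_pos_of_pos (hppos D' q) (1 - α))) Finset.univ_nonempty
  have hlogle : Real.log (∑ q, p D q ^ α * p D' q ^ (1 - α)) ≤
      ε ^ 2 / 8 * (α * (α - 1)) := by
    calc Real.log (∑ q, p D q ^ α * p D' q ^ (1 - α))
        ≤ Real.log (Real.exp (ε ^ 2 / 8 * (α * (α - 1)))) :=
          Real.log_le_log hSpos hfinal
      _ = ε ^ 2 / 8 * (α * (α - 1)) := Real.log_exp _
  calc (α - 1)⁻¹ * Real.log (∑ q, p D q ^ α * p D' q ^ (1 - α))
      ≤ (α - 1)⁻¹ * (ε ^ 2 / 8 * (α * (α - 1))) :=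
        mul_le_mul_of_nonneg_left hlogle (inv_nonneg.mpr hα1.le)
    _ = ε ^ 2 / 8 * α := by
        field_simp
end

section
/- The augmented FLAIM utility score u(q;D_k) = w_q·(‖M_q(D_k) − M_q(D̂)‖₁ − c_q − τ̃_k(q)), where τ̃_k(q) = (1/|q|)·Σ_{j∈q} ‖M_{{j}}(D_k) − m_j‖₁ for fixed vectors m_j and the reference D̂ fixed, has L1 sensitivity at most 2·max_q w_q with respect to example-level changes in D_k. -/
/-- The marginal query `M_q` counting records of `D` matching each value of `A_q`. -/
noncomputable def marginal {d : ℕ} {A : Fin d → Type*} [∀ i, Fintype (A i)]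
    [∀ i, DecidableEq (A i)] (q : Finset (Fin d)) (D : Multiset (∀ i, A i))
    (a : ∀ i : {i // i ∈ q}, A i.1) : ℝ :=
  (D.filter (fun x => ∀ i : {i // i ∈ q}, x i.1 = a i)).card

/-- The 1-way marginal for feature `j`. -/
noncomputable def marginal1 {d : ℕ} {A : Fin d → Type*} [∀ i, DecidableEq (A i)]
    (j : Fin d) (D : Multiset (∀ i, A i)) (a : A j) : ℝ :=
  (D.filter (fun x => x j = a)).card

lemma marginal_cons {d : ℕ} {A : Fin d → Type*} [∀ i, Fintype (A i)]
    [∀ i, DecidableEq (A i)] (q : Finset (Fin d)) (D : Multiset (∀ i, A i))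
    (x : ∀ i, A i) (a : ∀ i : {i // i ∈ q}, A i.1) :
    marginal q (x ::ₘ D) a - marginal q D a =
      if (∀ i : {i // i ∈ q}, x i.1 = a i) then 1 else 0 := by
  simp only [marginal, Multiset.filter_cons]
  split <;> simp

lemma marginal_sum1 {d : ℕ} {A : Fin d → Type*} [∀ i, Fintype (A i)]
    [∀ i, DecidableEq (A i)] (q : Finset (Fin d)) (D : Multiset (∀ i, A i))
    (x : ∀ i, A i) :
    ∑ a : (∀ i : {i // i ∈ q}, A i.1), |marginal q (x ::ₘ D) a - marginal q D a| = 1 := by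
  have : ∀ a : (∀ i : {i // i ∈ q}, A i.1),
      |marginal q (x ::ₘ D) a - marginal q D a| =
        if a = (fun i : {i // i ∈ q} => x i.1) then 1 else 0 := by
    intro a
    rw [marginal_cons]
    have : (∀ i : {i // i ∈ q}, x i.1 = a i) ↔ a = (fun i : {i // i ∈ q} => x i.1) := by
      constructor
      · intro h; funext i; exact (h i).symm
      · intro h i; rw [h]
    simp only [this]
    split <;> simp
  simp [this]

lemma marginal1_sum1 {d : ℕ} {A : Fin d → Type*} [∀ i, Fintype (A i)]
    [∀ i, DecidableEq (A i)] (j : Fin d) (D : Multiset (∀ i, A i)) (x : ∀ i, A i) :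
    ∑ a : A j, |marginal1 j (x ::ₘ D) a - marginal1 j D a| = 1 := by
  have : ∀ a : A j, |marginal1 j (x ::ₘ D) a - marginal1 j D a| =
      if a = x j then 1 else 0 := by
    intro a
    simp only [marginal1, Multiset.filter_cons]
    split <;> rename_i h
    · simp [h.symm]
    · have : ¬ a = x j := fun hh => h hh.symm
      simp [this]
  simp [this]

lemma abs_sum_diff {α : Type*} [Fintype α] (f g M : α → ℝ) :
    abs ((∑ a, |f a - M a|) - ∑ a, |g a - M a|) ≤ ∑ a, |f a - g a| := by
  rw [← Finset.sum_sub_distrib]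
  refine (Finset.abs_sum_le_sum_abs _ _).trans (Finset.sum_le_sum fun a _ => ?_)
  calc abs (|f a - M a| - |g a - M a|) ≤ |(f a - M a) - (g a - M a)| := abs_abs_sub_abs_le_abs_sub _ _
    _ = |f a - g a| := by ring_nf

/-- The augmented FLAIM utility score
`u(q;D_k) = w_q·(‖M_q(D_k) − M_q(D̂)‖₁ − c_q − τ̃_k(q))`, where
`τ̃_k(q) = (1/|q|)·Σ_{j∈q} ‖M_{{j}}(D_k) − m_j‖₁` for fixed vectors `m_j` and fixed
reference marginals `Mhat`, has L1 sensitivity at most `2·max_q w_q` with respect to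
example-level changes (addition/removal of one record) in the client dataset. -/
theorem augflaim_utility_sensitivity {d : ℕ} {A : Fin d → Type*} [∀ i, Fintype (A i)]
    [∀ i, DecidableEq (A i)] {Q : Type*} [Fintype Q] [Nonempty Q]
    (qs : Q → Finset (Fin d)) (hqs : ∀ q, (qs q).Nonempty)
    (w : Q → ℝ) (hw : ∀ q, 0 ≤ w q) (c : Q → ℝ)
    (Mhat : ∀ q : Q, (∀ i : {i // i ∈ qs q}, A i.1) → ℝ)
    (m : ∀ j : Fin d, A j → ℝ)
    (τ : Q → Multiset (∀ i, A i) → ℝ)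
    (hτ : ∀ q D, τ q D =
      ((qs q).card : ℝ)⁻¹ * ∑ j ∈ qs q, ∑ a : A j, |marginal1 j D a - m j a|)
    (u : Q → Multiset (∀ i, A i) → ℝ)
    (hu : ∀ q D, u q D =
      w q * ((∑ a : ∀ i : {i // i ∈ qs q}, A i.1, |marginal (qs q) D a - Mhat q a|)
        - c q - τ q D)) :
    ∀ (D : Multiset (∀ i, A i)) (x : ∀ i, A i) (q : Q),
      |u q (x ::ₘ D) - u q D| ≤ 2 * Finset.univ.sup' Finset.univ_nonempty w := by
  intro D x q
  set S := fun D' => ∑ a : ∀ i : {i // i ∈ qs q}, A i.1, |marginal (qs q) D' a - Mhat q a|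
  have hS : |S (x ::ₘ D) - S D| ≤ 1 := by
    have := abs_sum_diff (fun a => marginal (qs q) (x ::ₘ D) a)
      (fun a => marginal (qs q) D a) (Mhat q)
    simpa [S, marginal_sum1] using this
  have hT : |τ q (x ::ₘ D) - τ q D| ≤ 1 := by
    rw [hτ, hτ, ← mul_sub, ← Finset.sum_sub_distrib]
    have hcard : (0:ℝ) < (qs q).card := by
      exact_mod_cast (hqs q).card_pos
    rw [abs_mul, abs_of_nonneg (inv_nonneg.2 hcard.le)]
    have hb : |∑ j ∈ qs q, ((∑ a : A j, |marginal1 j (x ::ₘ D) a - m j a|) -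
        ∑ a : A j, |marginal1 j D a - m j a|)| ≤ (qs q).card := by
      refine (Finset.abs_sum_le_sum_abs _ _).trans ?_
      calc ∑ j ∈ qs q, abs ((∑ a : A j, |marginal1 j (x ::ₘ D) a - m j a|) -
            ∑ a : A j, |marginal1 j D a - m j a|)
          ≤ ∑ j ∈ qs q, (1:ℝ) := by
            refine Finset.sum_le_sum fun j _ => ?_
            have := abs_sum_diff (fun a => marginal1 j (x ::ₘ D) a)
              (fun a => marginal1 j D a) (m j)
            simpa [marginal1_sum1] using this
        _ = (qs q).card := by simp
    refine le_trans (mul_le_mul_of_nonneg_left hb (inv_nonneg.2 hcard.le)) ?_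
    rw [inv_mul_cancel₀ hcard.ne']
  have hle : |u q (x ::ₘ D) - u q D| ≤ 2 * w q := by
    have key : u q (x ::ₘ D) - u q D
        = w q * ((S (x ::ₘ D) - S D) - (τ q (x ::ₘ D) - τ q D)) := by
      simp only [hu, S]; ring
    rw [key, abs_mul, abs_of_nonneg (hw q)]
    have h2 : |(S (x ::ₘ D) - S D) - (τ q (x ::ₘ D) - τ q D)| ≤ 2 := by
      refine (abs_sub _ _).trans ?_
      linarith
    nlinarith [hw q]
  exact hle.trans (by
    have := Finset.le_sup' w (Finset.mem_univ q)
    linarith)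
end
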